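/- Let 0 < β < 1 satisfy Σ_{n=1}^{∞} β^n < 2, and define g : ℓ∞(ℕ) → ℝ by g((x_n)_n) = limsup_{n→∞} |x_n| + Σ_{n=1}^{∞} β^n (x_n² − 2 x_n). Then the constant sequence 𝟙 = (1, 1, 1, …) satisfies g'(𝟙; e_n) = 0 for all n ≥ 1, yet 𝟙 is not a minimizer of g on ℓ∞(ℕ): indeed g(1, 1, 1, …) > g(1/2, 1/2, 1/2, …). -/

import Mathlib

open Filter Topology ENNReal

/-- **Example 5.** Let `0 < β < 1` with `∑_{n≥1} β^n < 2`, and on `ℓ∞(ℕ)` let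
`g x = limsup |x_n| + ∑_{n≥1} β^n (x_n² − 2 x_n)`.  Then the constant sequence
`𝟙 = (1,1,1,…)` satisfies `g'(𝟙; e_n) = 0` for all `n`, but `𝟙` is not a minimizer of `g` :
indeed `g(1,1,1,…) > g(1/2,1/2,1/2,…)`.
(The index `n : ℕ` of the formalization corresponds to `n+1 ≥ 1` of the statement.) -/
theorem statement16 (β : ℝ) (hβ0 : 0 < β) (hβ1 : β < 1)
    (hβ2 : ∑' n : ℕ, β ^ (n + 1) < 2)
    (g : lp (fun _ : ℕ => ℝ) ∞ → ℝ)
    (hg : ∀ x : lp (fun _ : ℕ => ℝ) ∞,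
      g x = Filter.limsup (fun n : ℕ => |x n|) atTop +
        ∑' n : ℕ, β ^ (n + 1) * ((x n) ^ 2 - 2 * x n))
    (one : lp (fun _ : ℕ => ℝ) ∞) (hone : ∀ n : ℕ, one n = 1)
    (half : lp (fun _ : ℕ => ℝ) ∞) (hhalf : ∀ n : ℕ, half n = 1 / 2) :
    (∀ n : ℕ,
      Tendsto (fun t : ℝ => (g (one + t • lp.single ∞ n (1 : ℝ)) - g one) / t)
        (𝓝[≠] (0 : ℝ)) (𝓝 (0 : ℝ))) ∧
    ¬ (∀ x : lp (fun _ : ℕ => ℝ) ∞, g one ≤ g x) ∧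
    g half < g one := by
  have hS : Summable (fun n : ℕ => β ^ (n + 1)) := by
    simpa [pow_succ] using
      (summable_geometric_of_lt_one hβ0.le hβ1).mul_right β
  set S : ℝ := ∑' n : ℕ, β ^ (n + 1) with hSdef
  -- g one = 1 - S
  have hgone : g one = 1 - S := by
    rw [hg]
    have h1 : Filter.limsup (fun n : ℕ => |one n|) atTop = 1 := by
      have : (fun n : ℕ => |one n|) = fun _ : ℕ => (1 : ℝ) := by
        funext n; rw [hone]; simp
      rw [this, limsup_const]
    have h2 : (∑' n : ℕ, β ^ (n + 1) * ((one n) ^ 2 - 2 * one n)) = -S := by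
      have : (fun n : ℕ => β ^ (n + 1) * ((one n) ^ 2 - 2 * one n)) =
          fun n : ℕ => -(β ^ (n + 1)) := by
        funext n; rw [hone]; ring
      rw [this, tsum_neg]
    rw [h1, h2]; ring
  -- g half = 1/2 - (3/4) S
  have hghalf : g half = 1 / 2 - (3 / 4) * S := by
    rw [hg]
    have h1 : Filter.limsup (fun n : ℕ => |half n|) atTop = 1 / 2 := by
      have : (fun n : ℕ => |half n|) = fun _ : ℕ => (1 / 2 : ℝ) := by
        funext n; rw [hhalf]; norm_num
      rw [this, limsup_const]
    have h2 : (∑' n : ℕ, β ^ (n + 1) * ((half n) ^ 2 - 2 * half n)) =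
        -(3 / 4) * S := by
      have : (fun n : ℕ => β ^ (n + 1) * ((half n) ^ 2 - 2 * half n)) =
          fun n : ℕ => (-(3 / 4) : ℝ) * β ^ (n + 1) := by
        funext n; rw [hhalf]; ring
      rw [this, tsum_mul_left]
    rw [h1, h2]; ring
  have hlt : g half < g one := by rw [hgone, hghalf]; linarith
  refine ⟨?_, fun h => absurd (h half) (not_le.mpr hlt), hlt⟩
  intro n
  -- key: g (one + t • e_n) - g one = β^(n+1) * t^2
  have key : ∀ t : ℝ, g (one + t • lp.single ∞ n (1 : ℝ)) - g one =
      β ^ (n + 1) * t ^ 2 := by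
    intro t
    set x := one + t • lp.single ∞ n (1 : ℝ) with hx
    have hxc : ∀ k : ℕ, x k = 1 + (if k = n then t else 0) := by
      intro k
      rcases eq_or_ne k n with rfl | hk
      · simp [hx, lp.coeFn_add, lp.coeFn_smul, Pi.add_apply, Pi.smul_apply, hone, lp.single_apply_self]
        change one k + t * (lp.single ∞ k (1 : ℝ) : lp (fun _ : ℕ => ℝ) ∞) k = 1 + t; simp [hone, lp.single_apply_self]
      · simp [hx, lp.coeFn_add, lp.coeFn_smul, Pi.add_apply, Pi.smul_apply, hone, lp.single_apply_ne _ _ _ hk, hk]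
        change one k + t * (lp.single ∞ n (1 : ℝ) : lp (fun _ : ℕ => ℝ) ∞) k = 1; simp [hone, lp.single_apply_ne _ _ _ hk, Pi.single_eq_of_ne hk]
    rw [hg, hg]
    have h1 : Filter.limsup (fun k : ℕ => |x k|) atTop = 1 := by
      have heq : (fun k : ℕ => |x k|) =ᶠ[atTop] fun _ : ℕ => (1 : ℝ) := by
        filter_upwards [eventually_gt_atTop n] with k hk
        rw [hxc k, if_neg (by omega)]; simp
      rw [limsup_congr heq, limsup_const]
    have h1' : Filter.limsup (fun k : ℕ => |one k|) atTop = 1 := by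
      have : (fun k : ℕ => |one k|) = fun _ : ℕ => (1 : ℝ) := by
        funext k; rw [hone]; simp
      rw [this, limsup_const]
    have h2 : (∑' k : ℕ, β ^ (k + 1) * ((x k) ^ 2 - 2 * x k)) =
        β ^ (n + 1) * t ^ 2 - S := by
      have heq : (fun k : ℕ => β ^ (k + 1) * ((x k) ^ 2 - 2 * x k)) =
          fun k : ℕ => (if k = n then β ^ (n + 1) * t ^ 2 else 0) +
            (-(β ^ (k + 1))) := by
        funext k
        rw [hxc k]
        split_ifs with h <;> [subst h; skip] <;> ring
      rw [heq, Summable.tsum_add ⟨β ^ (n + 1) * t ^ 2, hasSum_ite_eq n _⟩ hS.neg,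
        tsum_ite_eq, tsum_neg]
      ring
    have h2' : (∑' k : ℕ, β ^ (k + 1) * ((one k) ^ 2 - 2 * one k)) = -S := by
      have : (fun k : ℕ => β ^ (k + 1) * ((one k) ^ 2 - 2 * one k)) =
          fun k : ℕ => -(β ^ (k + 1)) := by
        funext k; rw [hone]; ring
      rw [this, tsum_neg]
    rw [h1, h2, h1', h2']; ring
  have : Tendsto (fun t : ℝ => β ^ (n + 1) * t) (𝓝[≠] (0 : ℝ)) (𝓝 0) := by
    have := (tendsto_id.const_mul (β ^ (n + 1)) :
      Tendsto (fun t : ℝ => β ^ (n + 1) * t) (𝓝 (0 : ℝ)) (𝓝 (β ^ (n + 1) * 0)))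
    simpa using this.mono_left nhdsWithin_le_nhds
  refine this.congr' ?_
  filter_upwards [self_mem_nhdsWithin] with t ht
  have ht' : t ≠ 0 := ht
  rw [key t, pow_two, ← mul_assoc, mul_div_assoc, div_self ht', mul_one]
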